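/- arXiv:2201.13364 — 9 statements merged into one kernel-verified Lean document; each statement's English description precedes it below -/
import Mathlib

section
/- Let R be a unique factorization domain and S ⊆ R a multiplicative submonoid with 0 ∉ S, and let L be a localization of R at S with localization map φ : R → L. Then every unit u of L can be written as u = φ(v) · φ(p₁)^{k₁} ⋯ φ(p_r)^{k_r}, where v is a unit of R, each p_j is a prime element of R that divides some element of S (so that φ(p_j) is a unit of L and its integer powers are well defined), and k₁, …, k_r are integers. -/
open UniqueFactorizationMonoid in
lemma exists_prime_list_factorization {R : Type*} [CommRing R] [IsDomain R]
    [UniqueFactorizationMonoid R] {a : R} (ha : a ≠ 0) :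
    ∃ (v : Rˣ) (l : List R), (∀ q ∈ l, Prime q) ∧ a = v * l.prod := by
  obtain ⟨v, hv⟩ := (factors_prod ha)
  refine ⟨v, (factors a).toList, fun q hq => prime_of_factor q (by
    rwa [← Multiset.mem_toList]), ?_⟩
  rw [Multiset.prod_toList, mul_comm, hv]


/-- **Units of a localization of a UFD.**
If `R` is a unique factorization domain, `S ⊆ R` a multiplicative submonoid with `0 ∉ S`,
and `L` a localization of `R` at `S` with localization map `φ = algebraMap R L`, then every
unit `u` of `L` is of the form `φ(v) · φ(p₁)^{k₁} ⋯ φ(p_r)^{k_r}` with `v ∈ Rˣ`, the `p_j`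
prime elements of `R` dividing some element of `S`, and `k_j ∈ ℤ` (integer powers being
taken in `Lˣ` via units `w j` over `φ(p_j)`). -/
theorem units_of_localization_of_UFD {R L : Type*} [CommRing R] [IsDomain R]
    [UniqueFactorizationMonoid R] (S : Submonoid R) (hS : (0 : R) ∉ S)
    [CommRing L] [Algebra R L] [IsLocalization S L] (u : Lˣ) :
    ∃ (r : ℕ) (v : Rˣ) (p : Fin r → R) (k : Fin r → ℤ) (w : Fin r → Lˣ),
      (∀ j, Prime (p j)) ∧
      (∀ j, ∃ s ∈ S, p j ∣ s) ∧
      (∀ j, (w j : L) = algebraMap R L (p j)) ∧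
      (u : L) = algebraMap R L (v : R) * ∏ j, ((w j ^ k j : Lˣ) : L) := by
  set φ := algebraMap R L with hφ
  have hle : S ≤ nonZeroDivisors R := le_nonZeroDivisors_of_noZeroDivisors hS
  have hinj : Function.Injective φ := IsLocalization.injective L hle
  haveI : Nontrivial L := ⟨⟨φ 0, φ 1, fun h => zero_ne_one (hinj h)⟩⟩
  obtain ⟨⟨a, s⟩, hu⟩ := IsLocalization.mk'_surjective S (u : L)
  replace hu : IsLocalization.mk' L a s = (u : L) := hu
  have hsu : IsUnit (φ s) := IsLocalization.map_units L s
  have hua : (u : L) * φ s = φ a := by rw [← hu, IsLocalization.mk'_spec]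
  have hau : IsUnit (φ a) := by rw [← hua]; exact u.isUnit.mul hsu
  have ha0 : a ≠ 0 := by
    rintro rfl
    rw [map_zero] at hau
    exact not_isUnit_zero hau
  have hs0 : (s : R) ≠ 0 := fun h => hS (h ▸ s.2)
  -- key: a unit image pulls back to a divisor of an element of S
  have key : ∀ q : R, IsUnit (φ q) → ∃ t ∈ S, q ∣ t := by
    intro q hq
    obtain ⟨⟨b, t⟩, hbt⟩ := IsLocalization.mk'_surjective S (↑hq.unit⁻¹ : L)
    replace hbt : IsLocalization.mk' L b t = (↑hq.unit⁻¹ : L) := hbt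
    have h1 : φ q * IsLocalization.mk' L b t = 1 := by
      rw [hbt]; exact hq.unit.mul_inv ▸ by rw [IsUnit.unit_spec]
    have h2 : φ (q * b) = φ t := by
      have := congrArg (· * φ (t : R)) h1
      simp only [one_mul] at this
      rw [mul_assoc, IsLocalization.mk'_spec] at this
      simp only [map_mul]; exact this
    exact ⟨t, t.2, ⟨b, (hinj h2).symm⟩⟩
  obtain ⟨va, la, hla, haeq⟩ := exists_prime_list_factorization ha0
  obtain ⟨vs, ls, hls, hseq⟩ := exists_prime_list_factorization hs0
  have hunit_la : ∀ q ∈ la, IsUnit (φ q) := fun q hq =>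
    isUnit_of_dvd_unit (map_dvd φ (dvd_mul_of_dvd_right (List.dvd_prod hq) _ |>.trans
      (by rw [haeq]))) hau
  have hunit_ls : ∀ q ∈ ls, IsUnit (φ q) := fun q hq =>
    isUnit_of_dvd_unit (map_dvd φ (dvd_mul_of_dvd_right (List.dvd_prod hq) _ |>.trans
      (by rw [hseq]))) hsu
  set m := la.length
  set n := ls.length
  set k : Fin (m + n) → ℤ := Fin.addCases (fun _ => 1) (fun _ => -1) with hk
  refine ⟨m + n, va * vs⁻¹, Fin.append la.get ls.get, k, ?_⟩
  have hp_left : ∀ i : Fin m, Fin.append la.get ls.get (Fin.castAdd n i) = la.get i :=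
    fun i => Fin.append_left _ _ i
  have hp_right : ∀ i : Fin n, Fin.append la.get ls.get (Fin.natAdd m i) = ls.get i :=
    fun i => Fin.append_right _ _ i
  have hk_left : ∀ i : Fin m, k (Fin.castAdd n i) = 1 := fun i => Fin.addCases_left i
  have hk_right : ∀ i : Fin n, k (Fin.natAdd m i) = -1 := fun i => Fin.addCases_right i
  have hw : ∀ j, IsUnit (φ (Fin.append la.get ls.get j)) := by
    intro j
    refine Fin.addCases (fun i => ?_) (fun i => ?_) j
    · rw [hp_left]; exact hunit_la _ (la.get_mem i)
    · rw [hp_right]; exact hunit_ls _ (ls.get_mem i)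
  refine ⟨fun j => (hw j).unit, ?_, ?_, fun j => (hw j).unit_spec, ?_⟩
  · intro j
    refine Fin.addCases (fun i => ?_) (fun i => ?_) j
    · rw [hp_left]; exact hla _ (la.get_mem i)
    · rw [hp_right]; exact hls _ (ls.get_mem i)
  · exact fun j => key _ (hw j)
  · -- the main equation
    set w : Fin (m + n) → Lˣ := fun j => (hw j).unit with hwdef
    have coe_prod : ∀ (N : ℕ) (f : Fin N → Lˣ),
        ((∏ i, f i : Lˣ) : L) = ∏ i, ((f i : Lˣ) : L) :=
      fun N f => map_prod (Units.coeHom L) f Finset.univ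
    set W : Lˣ := ∏ i : Fin n, w (Fin.natAdd m i) with hW
    have hla_prod : ∏ i : Fin m, la.get i = la.prod := by
      simp only [List.get_eq_getElem]
      exact Fin.prod_univ_getElem la
    have hls_prod : ∏ i : Fin n, ls.get i = ls.prod := by
      simp only [List.get_eq_getElem]
      exact Fin.prod_univ_getElem ls
    have hWs : (W : L) = φ ls.prod := by
      rw [hW, coe_prod]
      rw [← hls_prod, map_prod]
      refine Finset.prod_congr rfl fun i _ => ?_
      simp only [hwdef, IsUnit.unit_spec, hp_right]
    have hprod : ∏ j, ((w j ^ k j : Lˣ) : L) = φ la.prod * (↑W⁻¹ : L) := by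
      rw [Fin.prod_univ_add]
      have h1 : (∏ i : Fin m, ((w (Fin.castAdd n i) ^ k (Fin.castAdd n i) : Lˣ) : L))
          = φ la.prod := by
        rw [← hla_prod, map_prod]
        refine Finset.prod_congr rfl fun i _ => ?_
        rw [hk_left, zpow_one, hwdef]
        simp only [IsUnit.unit_spec, hp_left]
      have h2 : (∏ i : Fin n, ((w (Fin.natAdd m i) ^ k (Fin.natAdd m i) : Lˣ) : L))
          = (↑W⁻¹ : L) := by
        have e1 : (∏ i : Fin n, ((w (Fin.natAdd m i) ^ k (Fin.natAdd m i) : Lˣ) : L))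
            = ∏ i : Fin n, (((w (Fin.natAdd m i))⁻¹ : Lˣ) : L) := by
          refine Finset.prod_congr rfl fun i _ => ?_
          rw [hk_right, zpow_neg_one]
        rw [e1, ← coe_prod]
        congr 1
        rw [Finset.prod_inv_distrib, hW]
      rw [h1, h2]
    rw [hprod]
    refine hsu.mul_right_cancel ?_
    rw [hua]
    have hvs1 : φ (↑vs⁻¹ : R) * φ (vs : R) = 1 := by
      rw [← map_mul, Units.inv_mul, map_one]
    have hW1 : (↑W⁻¹ : L) * φ ls.prod = 1 := by
      rw [← hWs]; exact W.inv_mul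
    have hrhs : φ ↑(va * vs⁻¹) * (φ la.prod * (↑W⁻¹ : L)) * φ ↑s
        = (φ ↑va * φ la.prod) * ((φ (↑vs⁻¹ : R) * φ (vs : R)) * ((↑W⁻¹ : L) * φ ls.prod)) := by
      rw [hseq, Units.val_mul, map_mul, map_mul]
      ring
    rw [hrhs, hvs1, hW1, mul_one, mul_one, ← map_mul, ← haeq]
end

section
/- Let p ∈ ℤ[t] be a non-zero polynomial with non-negative coefficients, S the multiplicative submonoid of ℤ[t] generated by t and p, and L a localization of ℤ[t] at S with localization map φ. If r ∈ L is bounded, then there exist q ∈ ℤ[t] and k ∈ ℕ such that r · φ(p)^k = φ(q); that is, every bounded element of L ≅ ℤ[t, t⁻¹, p(t)⁻¹] already lies in the subring φ(ℤ[t])[φ(p)⁻¹] ≅ ℤ[t, p(t)⁻¹]. -/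
open Polynomial

/-- Every bounded element of `ℤ[t, t⁻¹, p(t)⁻¹]` lies in `ℤ[t, p(t)⁻¹]`. -/
theorem bounded_mem_int_poly_loc (p : ℤ[X]) (hp0 : p ≠ 0) (hpc : ∀ i, 0 ≤ p.coeff i)
    (S : Submonoid ℤ[X]) (hS : S = Submonoid.closure {X, p})
    (L : Type*) [CommRing L] [Algebra ℤ[X] L] [IsLocalization S L]
    (r : L)
    (hr : ∃ (m ℓ k : ℕ) (q : ℤ[X]),
        r * algebraMap ℤ[X] L (X ^ ℓ * p ^ k) = algebraMap ℤ[X] L q ∧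
        ∀ i : ℕ, -((m : ℤ) * (X ^ ℓ * p ^ k).coeff i) ≤ q.coeff i ∧
          q.coeff i ≤ (m : ℤ) * (X ^ ℓ * p ^ k).coeff i) :
    ∃ (q : ℤ[X]) (k : ℕ),
      r * (algebraMap ℤ[X] L p) ^ k = algebraMap ℤ[X] L q := by
  obtain ⟨m, ℓ, k, q, heq, hbd⟩ := hr
  -- below degree ℓ, all coefficients of X^ℓ * p^k vanish, hence so do those of q
  have hdvd : X ^ ℓ ∣ q := by
    rw [Polynomial.X_pow_dvd_iff]
    intro d hd
    have h0 : (X ^ ℓ * p ^ k).coeff d = 0 :=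
      Polynomial.X_pow_dvd_iff.mp (dvd_mul_right _ _) d hd
    have := hbd d
    rw [h0] at this
    simp only [mul_zero, neg_zero] at this
    omega
  obtain ⟨q', rfl⟩ := hdvd
  refine ⟨q', k, ?_⟩
  -- φ(X) is a unit
  have hXS : X ∈ S := by
    rw [hS]; exact Submonoid.subset_closure (Set.mem_insert _ _)
  have hu : IsUnit (algebraMap ℤ[X] L X) := IsLocalization.map_units L ⟨X, hXS⟩
  have hu' : IsUnit ((algebraMap ℤ[X] L X) ^ ℓ) := hu.pow ℓ
  apply hu'.mul_left_cancel
  rw [map_mul, map_mul, map_pow, map_pow] at heq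
  calc (algebraMap ℤ[X] L X) ^ ℓ * (r * (algebraMap ℤ[X] L p) ^ k)
      = r * ((algebraMap ℤ[X] L X) ^ ℓ * (algebraMap ℤ[X] L p) ^ k) := by ring
    _ = (algebraMap ℤ[X] L X) ^ ℓ * algebraMap ℤ[X] L q' := by rw [heq]
end

section
/- Let p ∈ ℤ[t] be a non-zero polynomial with non-negative coefficients, S the multiplicative submonoid of ℤ[t] generated by t and p, and L a localization of ℤ[t] at S with localization map φ. An element r ∈ L is bounded if and only if there exist k ∈ ℕ and q ∈ ℤ[t] such that r · φ(p)^k = φ(q) and the support of q is contained in the support of p^k (i.e. q.coeff i = 0 whenever (p^k).coeff i = 0). -/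
open Polynomial

private lemma coeff_pow_nonneg (p : ℤ[X]) (hpc : ∀ i, 0 ≤ p.coeff i) (k i : ℕ) :
    0 ≤ (p ^ k).coeff i := by
  induction k generalizing i with
  | zero =>
    simp only [pow_zero, coeff_one]
    split <;> norm_num
  | succ n ih =>
    rw [pow_succ, coeff_mul]
    exact Finset.sum_nonneg fun x _ => mul_nonneg (ih x.1) (hpc x.2)

/-- An element `r` of `ℤ[t, t⁻¹, p(t)⁻¹]` is bounded if and only if there are `k ∈ ℕ`
and `q ∈ ℤ[t]` with `r · φ(p)^k = φ(q)` and the support of `q` contained in the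
support of `p^k`. -/
theorem bounded_iff_support_subset (p : ℤ[X]) (hp0 : p ≠ 0) (hpc : ∀ i, 0 ≤ p.coeff i)
    (S : Submonoid ℤ[X]) (hS : S = Submonoid.closure {X, p})
    (L : Type*) [CommRing L] [Algebra ℤ[X] L] [IsLocalization S L]
    (r : L) :
    (∃ (m ℓ k : ℕ) (q : ℤ[X]),
        r * algebraMap ℤ[X] L (X ^ ℓ * p ^ k) = algebraMap ℤ[X] L q ∧
        ∀ i : ℕ, -((m : ℤ) * (X ^ ℓ * p ^ k).coeff i) ≤ q.coeff i ∧
          q.coeff i ≤ (m : ℤ) * (X ^ ℓ * p ^ k).coeff i) ↔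
    (∃ (k : ℕ) (q : ℤ[X]),
        r * (algebraMap ℤ[X] L p) ^ k = algebraMap ℤ[X] L q ∧
        ∀ i : ℕ, (p ^ k).coeff i = 0 → q.coeff i = 0) := by
  constructor
  · rintro ⟨m, ℓ, k, q, heq, hbd⟩
    -- q vanishes wherever X^ℓ * p^k does
    have hzero : ∀ i, (X ^ ℓ * p ^ k).coeff i = 0 → q.coeff i = 0 := by
      intro i h
      have := hbd i
      rw [h, mul_zero] at this
      omega
    -- X^ℓ divides q
    have hdvd : X ^ ℓ ∣ q := by
      rw [X_pow_dvd_iff]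
      intro d hd
      apply hzero
      rw [coeff_X_pow_mul']
      simp [Nat.not_le.mpr hd]
    obtain ⟨q', rfl⟩ := hdvd
    have hXS : (X : ℤ[X]) ^ ℓ ∈ S := by
      rw [hS]
      exact pow_mem (Submonoid.subset_closure (Set.mem_insert _ _)) ℓ
    have hunit : IsUnit (algebraMap ℤ[X] L (X ^ ℓ)) :=
      IsLocalization.map_units L ⟨X ^ ℓ, hXS⟩
    refine ⟨k, q', ?_, ?_⟩
    · have : algebraMap ℤ[X] L (X ^ ℓ) * (r * (algebraMap ℤ[X] L p) ^ k) =
          algebraMap ℤ[X] L (X ^ ℓ) * algebraMap ℤ[X] L q' := by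
        rw [← map_pow, ← map_mul]
        rw [map_mul] at heq
        ring_nf
        ring_nf at heq
        linear_combination heq
      exact hunit.mul_left_cancel this
    · intro i h
      have h2 : (X ^ ℓ * p ^ k).coeff (i + ℓ) = 0 := by
        rw [coeff_X_pow_mul]
        exact h
      have h3 := hzero (i + ℓ) h2
      rwa [coeff_X_pow_mul] at h3
  · rintro ⟨k, q, heq, hsupp⟩
    refine ⟨q.support.sum fun j => (q.coeff j).natAbs, 0, k, q, ?_, ?_⟩
    · rw [pow_zero, one_mul, map_pow]
      exact heq
    · intro i
      simp only [pow_zero, one_mul]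
      by_cases h : (p ^ k).coeff i = 0
      · rw [h, hsupp i h, mul_zero]
        simp
      · have hc1 : (1 : ℤ) ≤ (p ^ k).coeff i := by
          have := coeff_pow_nonneg p hpc k i
          omega
        have habs : (q.coeff i).natAbs ≤ q.support.sum fun j => (q.coeff j).natAbs := by
          by_cases hi : i ∈ q.support
          · exact Finset.single_le_sum (f := fun j => (q.coeff j).natAbs)
              (fun _ _ => Nat.zero_le _) hi
          · simp [Polynomial.notMem_support_iff.mp hi]
        set M : ℤ := ((q.support.sum fun j => (q.coeff j).natAbs : ℕ) : ℤ) with hM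
        have hm : |q.coeff i| ≤ M := by
          rw [Int.abs_eq_natAbs, hM]
          exact Nat.cast_le.mpr habs
        have hM0 : 0 ≤ M := by positivity
        have hle : M ≤ M * (p ^ k).coeff i := le_mul_of_one_le_right hM0 hc1
        constructor
        · have h1 := neg_abs_le (q.coeff i)
          linarith
        · have h1 := le_abs_self (q.coeff i)
          linarith
end

section
/- Let p ∈ ℕ[t] be a polynomial of degree d ≥ 1 with non-zero constant coefficient. Then there exists N ∈ ℕ, N ≥ 1, such that p^N has large middle coefficients; that is, p^N has non-zero constant coefficient, non-zero leading coefficient (of degree N·d), and the coefficient of t^j in p^N is different from 1 for every j with 0 < j < N·d. -/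
open Polynomial

private lemma coeff_mul_single_le (q r : Polynomial ℕ) (i k : ℕ) :
    q.coeff i * r.coeff k ≤ (q * r).coeff (i + k) := by
  rw [coeff_mul]
  exact Finset.single_le_sum (f := fun x : ℕ × ℕ => q.coeff x.1 * r.coeff x.2)
    (fun _ _ => Nat.zero_le _)
    (by simp : ((i, k) : ℕ × ℕ) ∈ Finset.HasAntidiagonal.antidiagonal (i + k))

private lemma coeff_mul_two_split_le (q r : Polynomial ℕ) {i1 k1 i2 k2 j : ℕ}
    (h1 : i1 + k1 = j) (h2 : i2 + k2 = j) (hne : i1 ≠ i2) :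
    q.coeff i1 * r.coeff k1 + q.coeff i2 * r.coeff k2 ≤ (q * r).coeff j := by
  rw [coeff_mul]
  have hsub : ({(i1, k1), (i2, k2)} : Finset (ℕ × ℕ)) ⊆ Finset.HasAntidiagonal.antidiagonal j := by
    intro x hx
    simp only [Finset.mem_insert, Finset.mem_singleton] at hx
    rcases hx with rfl | rfl <;> simp [Finset.HasAntidiagonal.mem_antidiagonal, h1, h2]
  have hpair : ((i1, k1) : ℕ × ℕ) ≠ (i2, k2) := by
    simp [Prod.ext_iff, hne]
  calc q.coeff i1 * r.coeff k1 + q.coeff i2 * r.coeff k2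
      = ∑ x ∈ ({(i1, k1), (i2, k2)} : Finset (ℕ × ℕ)), q.coeff x.1 * r.coeff x.2 := by
        rw [Finset.sum_pair hpair]
    _ ≤ ∑ x ∈ Finset.HasAntidiagonal.antidiagonal j, q.coeff x.1 * r.coeff x.2 :=
        Finset.sum_le_sum_of_subset hsub

private lemma pow_coeff_le (p : Polynomial ℕ) (s : ℕ) :
    ∀ n : ℕ, (p.coeff s) ^ n ≤ (p ^ n).coeff (n * s) := by
  intro n
  induction n with
  | zero => simp
  | succ n ih =>
    have : (n + 1) * s = s + n * s := by ring
    rw [this, pow_succ' p, pow_succ']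
    calc p.coeff s * p.coeff s ^ n
        ≤ p.coeff s * (p ^ n).coeff (n * s) := Nat.mul_le_mul_left _ ih
      _ ≤ (p * p ^ n).coeff (s + n * s) := coeff_mul_single_le _ _ _ _

private lemma list_coeff_pos (p : Polynomial ℕ) :
    ∀ l : List ℕ, (∀ x ∈ l, p.coeff x ≠ 0) → (p ^ l.length).coeff l.sum ≠ 0 := by
  intro l
  induction l with
  | nil => simp
  | cons a l ih =>
    intro h
    have ha : p.coeff a ≠ 0 := h a List.mem_cons_self
    have hl : (p ^ l.length).coeff l.sum ≠ 0 := ih (fun x hx => h x (List.mem_cons_of_mem a hx))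
    have hle : p.coeff a * (p ^ l.length).coeff l.sum ≤ (p * p ^ l.length).coeff (a + l.sum) :=
      coeff_mul_single_le _ _ _ _
    have hpos : 0 < p.coeff a * (p ^ l.length).coeff l.sum :=
      Nat.pos_of_ne_zero (mul_ne_zero ha hl)
    have : 0 < (p * p ^ l.length).coeff (a + l.sum) := lt_of_lt_of_le hpos hle
    simpa [List.length_cons, List.sum_cons, pow_succ'] using this.ne'

private lemma pow_coeff_extract (p : Polynomial ℕ) :
    ∀ n j : ℕ, (p ^ n).coeff j ≠ 0 →
      ∃ l : List ℕ, l.length = n ∧ l.sum = j ∧ ∀ x ∈ l, p.coeff x ≠ 0 := by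
  intro n
  induction n with
  | zero =>
    intro j hj
    have : j = 0 := by
      by_contra h
      simp [coeff_one, h] at hj
    exact ⟨[], rfl, by simp [this], by simp⟩
  | succ n ih =>
    intro j hj
    rw [pow_succ', coeff_mul] at hj
    obtain ⟨x, hx, hne⟩ := Finset.exists_ne_zero_of_sum_ne_zero hj
    have hx1 : p.coeff x.1 ≠ 0 := fun h => hne (by simp [h])
    have hx2 : (p ^ n).coeff x.2 ≠ 0 := fun h => hne (by simp [h])
    obtain ⟨l, hlen, hsum, hall⟩ := ih x.2 hx2
    refine ⟨x.1 :: l, by simp [hlen], ?_, ?_⟩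
    · simp [hsum]
      exact Finset.HasAntidiagonal.mem_antidiagonal.mp hx
    · intro y hy
      rcases List.mem_cons.mp hy with rfl | hy
      · exact hx1
      · exact hall y hy

/-- For any polynomial `p ∈ ℕ[t]` of degree `d ≥ 1` with non-zero constant term there is
`N ≥ 1` such that `p^N` has large middle coefficients. -/
theorem exists_pow_large_middle_coefficients (p : Polynomial ℕ)
    (hd : 1 ≤ p.natDegree) (h0 : p.coeff 0 ≠ 0) :
    ∃ N : ℕ, 1 ≤ N ∧
      (p ^ N).coeff 0 ≠ 0 ∧
      (p ^ N).coeff (N * p.natDegree) ≠ 0 ∧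
      ∀ j : ℕ, 0 < j → j < N * p.natDegree → (p ^ N).coeff j ≠ 1 := by
  set d := p.natDegree with hdd
  have hp0 : p ≠ 0 := fun h => h0 (by simp [h])
  have hlead : p.leadingCoeff ≠ 0 := leadingCoeff_ne_zero.mpr hp0
  refine ⟨d, hd, ?_, ?_, ?_⟩
  · -- constant coefficient
    have : (p ^ d).coeff 0 = (p.coeff 0) ^ d := by
      simpa [constantCoeff_apply] using map_pow (constantCoeff (R := ℕ)) p d
    rw [this]
    exact pow_ne_zero _ h0
  · -- leading coefficient
    rw [coeff_pow_mul_natDegree]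
    exact pow_ne_zero _ hlead
  · intro j hj0 hjlt hcoeff
    -- extract a witness list
    have hne : (p ^ d).coeff j ≠ 0 := by rw [hcoeff]; exact one_ne_zero
    obtain ⟨l, hlen, hsum, hall⟩ := pow_coeff_extract p d j hne
    have hlnil : l ≠ [] := by
      intro h; rw [h] at hlen; simp at hlen; omega
    obtain ⟨a, t, rfl⟩ := List.exists_cons_of_ne_nil hlnil
    by_cases hca : ∀ x ∈ a :: t, x = a
    · -- all elements equal to a; j = d * a with 0 < a < d
      have hrep : (a :: t) = List.replicate d a := by
        apply List.eq_replicate_iff.mpr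
        exact ⟨hlen, hca⟩
      have hja : j = d * a := by
        rw [← hsum, hrep]
        simp [List.sum_replicate, Nat.smul_one_eq_cast]
      have ha0 : 0 < a := by
        rcases Nat.eq_zero_or_pos a with h | h
        · exfalso; rw [h, mul_zero] at hja; omega
        · exact h
      have had : a < d := by
        by_contra h
        push_neg at h
        have : d * d ≤ d * a := Nat.mul_le_mul_left d h
        omega
      have hcoa : p.coeff a ≠ 0 := hall a List.mem_cons_self
      -- two splits of j = d*a in p^(d-a) * p^a
      have hdsplit : p ^ d = p ^ (d - a) * p ^ a := by
        rw [← pow_add, Nat.sub_add_cancel (le_of_lt had)]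
      have hs1 : (d - a) * a + a * a = j := by
        rw [hja, ← add_mul, Nat.sub_add_cancel had.le]
      have hs2 : 0 + a * d = j := by rw [hja]; ring
      have hne12 : (d - a) * a ≠ 0 := by
        have : 0 < d - a := by omega
        positivity
      have hb1 : (p ^ (d - a)).coeff ((d - a) * a) ≠ 0 := by
        have h1 := pow_coeff_le p a (d - a)
        have hp : (p.coeff a) ^ (d - a) ≠ 0 := pow_ne_zero _ hcoa
        exact fun h => hp (Nat.le_zero.mp (h ▸ h1))
      have hb2 : (p ^ a).coeff (a * a) ≠ 0 := by
        have h1 := pow_coeff_le p a a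
        have hp : (p.coeff a) ^ a ≠ 0 := pow_ne_zero _ hcoa
        exact fun h => hp (Nat.le_zero.mp (h ▸ h1))
      have hb3 : (p ^ (d - a)).coeff 0 ≠ 0 := by
        have : (p ^ (d - a)).coeff 0 = (p.coeff 0) ^ (d - a) := by
          simpa [constantCoeff_apply] using map_pow (constantCoeff (R := ℕ)) p (d - a)
        rw [this]; exact pow_ne_zero _ h0
      have hb4 : (p ^ a).coeff (a * d) ≠ 0 := by
        rw [hdd, coeff_pow_mul_natDegree]
        exact pow_ne_zero _ hlead
      have key := coeff_mul_two_split_le (p ^ (d - a)) (p ^ a) hs1 hs2 hne12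
      rw [← hdsplit, hcoeff] at key
      have t1 : 1 ≤ (p ^ (d - a)).coeff ((d - a) * a) * (p ^ a).coeff (a * a) :=
        Nat.one_le_iff_ne_zero.mpr (mul_ne_zero hb1 hb2)
      have t2 : 1 ≤ (p ^ (d - a)).coeff 0 * (p ^ a).coeff (a * d) :=
        Nat.one_le_iff_ne_zero.mpr (mul_ne_zero hb3 hb4)
      omega
    · -- two distinct values in the list
      push_neg at hca
      obtain ⟨b, hb, hba⟩ := hca
      have hcb : p.coeff b ≠ 0 := hall b hb
      have hcoa : p.coeff a ≠ 0 := hall a List.mem_cons_self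
      -- use erase
      have hmem_a : a ∈ a :: t := List.mem_cons_self
      have perm_a := List.perm_cons_erase hmem_a
      have perm_b := List.perm_cons_erase hb
      have hsum_a : j = a + ((a :: t).erase a).sum := by
        rw [← hsum]; exact (List.Perm.sum_eq perm_a)
      have hsum_b : j = b + ((a :: t).erase b).sum := by
        rw [← hsum]; exact (List.Perm.sum_eq perm_b)
      have hlen' : t.length + 1 = d := by rw [← hlen, List.length_cons]
      have hlen_a : ((a :: t).erase a).length = d - 1 := by
        have h1 := perm_a.length_eq
        rw [List.length_cons, List.length_cons] at h1
        omega
      have hlen_b : ((a :: t).erase b).length = d - 1 := by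
        have h1 := perm_b.length_eq
        rw [List.length_cons, List.length_cons] at h1
        omega
      have hca' : (p ^ (d - 1)).coeff (((a :: t).erase a).sum) ≠ 0 := by
        have := list_coeff_pos p ((a :: t).erase a) (fun x hx => hall x (List.mem_of_mem_erase hx))
        rwa [hlen_a] at this
      have hcb' : (p ^ (d - 1)).coeff (((a :: t).erase b).sum) ≠ 0 := by
        have := list_coeff_pos p ((a :: t).erase b) (fun x hx => hall x (List.mem_of_mem_erase hx))
        rwa [hlen_b] at this
      have hdsplit : p ^ d = p * p ^ (d - 1) := by
        rw [← pow_succ']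
        congr 1
        omega
      have key := coeff_mul_two_split_le p (p ^ (d - 1))
        (hsum_a.symm) (hsum_b.symm) (Ne.symm hba)
      rw [← hdsplit, hcoeff] at key
      have t1 : 1 ≤ p.coeff a * (p ^ (d - 1)).coeff (((a :: t).erase a).sum) :=
        Nat.one_le_iff_ne_zero.mpr (mul_ne_zero hcoa hca')
      have t2 : 1 ≤ p.coeff b * (p ^ (d - 1)).coeff (((a :: t).erase b).sum) :=
        Nat.one_le_iff_ne_zero.mpr (mul_ne_zero hcb hcb')
      omega
end

section
/- Let p ∈ ℕ[t] be a polynomial of degree d ≥ 1 with non-zero constant coefficient. Then p^d has large middle coefficients: p^d has degree d², its constant and leading coefficients are non-zero, and the coefficient of t^j in p^d is different from 1 for every j with 0 < j < d². -/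
open Polynomial Finset

lemma poly_coeff_pow_aux (p : Polynomial ℕ) (k n : ℕ) :
    (p ^ k).coeff n = ∑ l ∈ Finset.finsuppAntidiag (Finset.range k) n,
      ∏ i ∈ Finset.range k, p.coeff (l i) := by
  simpa [← Polynomial.coeff_coe, ← Polynomial.coe_pow] using
    PowerSeries.coeff_pow k n (p : PowerSeries ℕ)

/-- For any polynomial `p ∈ ℕ[t]` of degree `d ≥ 1` with non-zero constant term,
`p^d` has large middle coefficients: its degree is `d²`, its constant and leading
coefficients are non-zero, and all middle coefficients are different from `1`. -/
theorem pow_natDegree_large_middle_coefficients (p : Polynomial ℕ)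
    (hd : 1 ≤ p.natDegree) (h0 : p.coeff 0 ≠ 0) :
    (p ^ p.natDegree).natDegree = p.natDegree * p.natDegree ∧
    (p ^ p.natDegree).coeff 0 ≠ 0 ∧
    (p ^ p.natDegree).coeff (p.natDegree * p.natDegree) ≠ 0 ∧
    ∀ j : ℕ, 0 < j → j < p.natDegree * p.natDegree → (p ^ p.natDegree).coeff j ≠ 1 := by
  set d := p.natDegree with hdef
  have hp0 : p ≠ 0 := fun h => h0 (by simp [h])
  have hdeg : (p ^ d).natDegree = d * d := by
    rw [Polynomial.natDegree_pow]
  refine ⟨hdeg, ?_, ?_, ?_⟩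
  · rw [← Polynomial.constantCoeff_apply, map_pow]
    exact pow_ne_zero _ h0
  · have : (p ^ d).coeff (d * d) = (p ^ d).leadingCoeff := by
      rw [Polynomial.leadingCoeff, hdeg]
    rw [this, Polynomial.leadingCoeff_pow]
    exact pow_ne_zero _ (Polynomial.leadingCoeff_ne_zero.mpr hp0)
  · intro j hj hjd hc
    rw [poly_coeff_pow_aux] at hc
    set A := Finset.finsuppAntidiag (Finset.range d) j with hA
    set F : (ℕ →₀ ℕ) → ℕ := fun l => ∏ i ∈ Finset.range d, p.coeff (l i) with hF
    -- there is a contributing tuple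
    obtain ⟨μ, hμA, hμne⟩ : ∃ μ ∈ A, F μ ≠ 0 := by
      by_contra h
      push_neg at h
      rw [Finset.sum_eq_zero h] at hc
      exact absurd hc (by norm_num)
    rw [Finset.mem_finsuppAntidiag] at hμA
    obtain ⟨hμsum, hμsupp⟩ := hμA
    -- construct a second contributing tuple ν ≠ μ
    obtain ⟨ν, hνA, hνne, hνμ⟩ : ∃ ν ∈ A, F ν ≠ 0 ∧ ν ≠ μ := by
      by_cases hconst : ∀ i₁ ∈ Finset.range d, ∀ i₂ ∈ Finset.range d, μ i₁ = μ i₂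
      · -- constant case: μ ≡ k with 0 < k < d; use k copies of d and d - k zeros
        have h0d : 0 ∈ Finset.range d := Finset.mem_range.mpr hd
        set k := μ 0 with hk
        have hsum' : j = d * k := by
          rw [← hμsum, Finset.sum_congr rfl (fun i hi => hconst i hi 0 h0d)]
          simp [mul_comm, hk]
        have hkpos : 0 < k := by
          rcases Nat.eq_zero_or_pos k with h | h
          · exact absurd (hsum' ▸ hj) (by simp [h])
          · exact h
        have hkd : k < d := by
          have := hsum' ▸ hjd
          exact lt_of_mul_lt_mul_left this (Nat.zero_le d)
        set ν : ℕ →₀ ℕ := Finsupp.onFinset (Finset.range k)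
          (fun x => if x < k then d else 0) (fun a ha => by
            simp only [ne_eq, ite_eq_right_iff, not_forall] at ha
            exact Finset.mem_range.mpr ha.1) with hν
        have hν0 : ν 0 = d := by
          simp only [hν, Finsupp.onFinset_apply, if_pos hkpos]
        refine ⟨ν, ?_, ?_, ?_⟩
        · rw [hA, Finset.mem_finsuppAntidiag]
          constructor
          · have hsplit : ∑ x ∈ Finset.range k, (if x < k then d else 0)
                + ∑ x ∈ Finset.Ico k d, (if x < k then d else 0)
                = ∑ x ∈ Finset.range d, (if x < k then d else 0) :=
              Finset.sum_range_add_sum_Ico _ hkd.le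
            have h1 : ∑ x ∈ Finset.range k, (if x < k then d else 0) = k * d := by
              rw [Finset.sum_congr rfl (fun x hx => if_pos (Finset.mem_range.mp hx))]
              simp [mul_comm]
            have h2 : ∑ x ∈ Finset.Ico k d, (if x < k then d else 0) = 0 :=
              Finset.sum_eq_zero (fun x hx =>
                if_neg (not_lt.mpr (Finset.mem_Ico.mp hx).1))
            simp only [hν, Finsupp.onFinset_apply, Finsupp.coe_onFinset]
            rw [← hsplit, h1, h2, hsum', add_zero, mul_comm]
          · exact (Finsupp.support_onFinset_subset).trans
              (Finset.range_subset_range.mpr hkd.le)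
        · rw [hF]
          rw [Finset.prod_ne_zero_iff]
          intro i _
          simp only [hν, Finsupp.onFinset_apply]
          split
          · exact Polynomial.leadingCoeff_ne_zero.mpr hp0
          · exact h0
        · intro h
          have hd0 : ν 0 = μ 0 := by rw [h]
          rw [hν0, ← hk] at hd0
          omega
      · -- non-constant case: swap two different values
        push_neg at hconst
        obtain ⟨i₁, hi₁, i₂, hi₂, hne⟩ := hconst
        set e := Equiv.swap i₁ i₂ with he
        have hemem : ∀ x, x ∈ Finset.range d ↔ e x ∈ Finset.range d := by
          intro x
          rcases eq_or_ne x i₁ with rfl | h1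
          · simp [he, Equiv.swap_apply_left, hi₁, hi₂]
          rcases eq_or_ne x i₂ with rfl | h2
          · simp [he, Equiv.swap_apply_right, hi₁, hi₂]
          · rw [he, Equiv.swap_apply_of_ne_of_ne h1 h2]
        refine ⟨Finsupp.equivMapDomain e μ, ?_, ?_, ?_⟩
        · rw [hA, Finset.mem_finsuppAntidiag]
          constructor
          · rw [← hμsum]
            exact Finset.sum_equiv e hemem (fun x _ => by
              simp only [Finsupp.equivMapDomain_apply, he, Equiv.symm_swap])
          · intro x hx
            rw [Finsupp.mem_support_iff, Finsupp.equivMapDomain_apply, he,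
              Equiv.symm_swap] at hx
            have h1 : Equiv.swap i₁ i₂ x ∈ Finset.range d :=
              hμsupp (Finsupp.mem_support_iff.mpr hx)
            exact (hemem x).mpr (by rwa [he])
        · have hFeq : F (Finsupp.equivMapDomain e μ) = F μ :=
            Finset.prod_equiv e hemem (fun x _ => by
              simp only [Finsupp.equivMapDomain_apply, he, Equiv.symm_swap])
          rw [hFeq]
          exact hμne
        · intro h
          have : (Finsupp.equivMapDomain e μ) i₁ = μ i₁ := by rw [h]
          rw [Finsupp.equivMapDomain_apply, he, Equiv.symm_swap,
            Equiv.swap_apply_left] at this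
          exact hne this.symm
    -- two distinct contributing tuples force the coefficient to be ≥ 2
    have hν' : ν ∈ A.erase μ := Finset.mem_erase.mpr ⟨hνμ, hνA⟩
    have hμA' : μ ∈ A := Finset.mem_finsuppAntidiag.mpr ⟨hμsum, hμsupp⟩
    have hsum2 : F μ + F ν ≤ ∑ l ∈ A, F l := by
      rw [← Finset.add_sum_erase A F hμA']
      exact Nat.add_le_add_left (Finset.single_le_sum (fun i _ => Nat.zero_le _) hν') _
    rw [hc] at hsum2
    omega
end

section
/- Let p ∈ ℕ[t] be a polynomial with non-zero constant coefficient and let m ∈ ℕ. For ℓ ∈ ℕ, the coefficient of t^ℓ in p^m is non-zero if and only if ℓ can be written as ℓ = Σ_i x_i · i, where (x_i)_{i ∈ ℕ} is a finitely supported family of natural numbers such that x_i = 0 whenever p.coeff i = 0 and Σ_i x_i ≤ m. -/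
open Polynomial

lemma mul_coeff_ne_zero_nat (p q : Polynomial ℕ) (n : ℕ) :
    (p * q).coeff n ≠ 0 ↔ ∃ a b, a + b = n ∧ p.coeff a ≠ 0 ∧ q.coeff b ≠ 0 := by
  rw [coeff_mul, ← not_iff_not]
  push_neg
  rw [Finset.sum_eq_zero_iff]
  constructor
  · intro h a b hab
    rcases mul_eq_zero.mp (h (a, b) (Finset.HasAntidiagonal.mem_antidiagonal.mpr hab)) with h' | h'
    · exact fun hc => absurd h' hc
    · exact fun _ => h'
  · rintro h ⟨a, b⟩ hab
    rw [Finset.HasAntidiagonal.mem_antidiagonal] at hab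
    by_cases hp : p.coeff a = 0
    · simp [hp]
    · simp [h a b hab hp]

/-- For `p ∈ ℕ[t]` with non-zero constant term, the coefficient of `t^ℓ` in `p^m` is
non-zero if and only if `ℓ = Σ_i x_i · i` for a finitely supported family `x : ℕ →₀ ℕ`
supported on the support of `p` with `Σ_i x_i ≤ m`. -/
theorem pow_coeff_ne_zero_iff (p : Polynomial ℕ) (h0 : p.coeff 0 ≠ 0) (m ℓ : ℕ) :
    (p ^ m).coeff ℓ ≠ 0 ↔
      ∃ x : ℕ →₀ ℕ,
        (∀ i : ℕ, p.coeff i = 0 → x i = 0) ∧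
        (x.sum fun _ v => v) ≤ m ∧
        ℓ = x.sum fun i v => v * i := by
  induction m generalizing ℓ with
  | zero =>
    simp only [pow_zero, coeff_one]
    constructor
    · intro h
      have hl : ℓ = 0 := by by_contra hc; simp [hc] at h
      exact ⟨0, by simp, by simp, by simp [hl]⟩
    · rintro ⟨x, h1, h2, h3⟩
      have hx0 : x = 0 := by
        ext i
        by_cases hi : i ∈ x.support
        · have := Finset.sum_eq_zero_iff.mp (Nat.le_zero.mp h2) i hi
          simpa using this
        · simpa using Finsupp.notMem_support_iff.mp hi
      subst hx0
      simp at h3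
      simp [h3]
  | succ m ih =>
    rw [pow_succ, mul_coeff_ne_zero_nat]
    constructor
    · rintro ⟨b, a, hab, hb, ha⟩
      obtain ⟨x, h1, h2, h3⟩ := ih b |>.mp hb
      refine ⟨x + Finsupp.single a 1, ?_, ?_, ?_⟩
      · intro i hi
        have hxi := h1 i hi
        have hia : i ≠ a := fun h => ha (h ▸ hi)
        simp [hxi, Finsupp.single_apply, Ne.symm hia]
      · rw [Finsupp.sum_add_index' (fun _ => rfl) (fun _ _ _ => rfl),
          Finsupp.sum_single_index rfl]
        omega
      · rw [Finsupp.sum_add_index' (fun i => (zero_mul i)) (fun i a b => (add_mul a b i)),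
          Finsupp.sum_single_index (zero_mul a), one_mul]
        omega
    · rintro ⟨x, h1, h2, h3⟩
      by_cases hx : (x.sum fun _ v => v) ≤ m
      · exact ⟨ℓ, 0, add_zero ℓ, (ih ℓ).mpr ⟨x, h1, hx, h3⟩, h0⟩
      · have hsum : (x.sum fun _ v => v) = m + 1 := by omega
        have hpos : 0 < x.sum fun _ v => v := by omega
        have hne : x ≠ 0 := by rintro rfl; simp at hpos
        obtain ⟨a, ha⟩ := Finsupp.support_nonempty_iff.mpr hne
        have hxa : x a ≠ 0 := Finsupp.mem_support_iff.mp ha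
        set y := x - Finsupp.single a 1 with hy
        have hxy : x = y + Finsupp.single a 1 := by
          ext i
          by_cases hia : i = a
          · subst hia
            simp [hy, Finsupp.tsub_apply, Finsupp.single_apply]
            omega
          · simp [hy, Finsupp.tsub_apply, Finsupp.single_apply, Ne.symm hia]
        have hysum : (x.sum fun _ v => v) = (y.sum fun _ v => v) + 1 := by
          rw [hxy, Finsupp.sum_add_index' (fun _ => rfl) (fun _ _ _ => rfl),
            Finsupp.sum_single_index rfl]
        have hywsum : (x.sum fun i v => v * i) = (y.sum fun i v => v * i) + a := by
          rw [hxy, Finsupp.sum_add_index' (fun i => (zero_mul i)) (fun i a b => (add_mul a b i)),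
            Finsupp.sum_single_index (zero_mul a), one_mul]
        have hy1 : ∀ i : ℕ, p.coeff i = 0 → y i = 0 := by
          intro i hi
          have := h1 i hi
          simp [hy, Finsupp.tsub_apply, this]
        have hb : (p ^ m).coeff (y.sum fun i v => v * i) ≠ 0 :=
          (ih _).mpr ⟨y, hy1, by omega, rfl⟩
        have hca : p.coeff a ≠ 0 := fun hc => hxa (h1 a hc)
        exact ⟨y.sum fun i v => v * i, a, by omega, hb, hca⟩
end

section
/- Let p ∈ ℤ[t] be a non-zero polynomial, S the multiplicative submonoid of ℤ[t] generated by t and p, and L a localization of ℤ[t] at S with localization map φ. Then every unit u of L can be written as u = φ(ε) · φ(t)^{k₀} · φ(q₁)^{k₁} ⋯ φ(q_s)^{k_s}, where ε ∈ {1, −1}, k₀, k₁, …, k_s ∈ ℤ, and q₁, …, q_s are prime elements of ℤ[t] each dividing p (so that φ(t) and each φ(q_j) are units of L and their integer powers are well defined). -/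
open Polynomial

/-- Every unit of `ℤ[t, t⁻¹, p(t)⁻¹]` is of the form
`± t^{k₀} · q₁(t)^{k₁} ⋯ q_s(t)^{k_s}` with the `q_j` prime factors of `p`
and `k₀, k₁, …, k_s ∈ ℤ`. -/
theorem units_of_laurent_localization (p : ℤ[X]) (hp0 : p ≠ 0)
    (S : Submonoid ℤ[X]) (hS : S = Submonoid.closure {X, p})
    (L : Type*) [CommRing L] [Algebra ℤ[X] L] [IsLocalization S L] (u : Lˣ) :
    ∃ (s : ℕ) (ε : ℤˣ) (k₀ : ℤ) (q : Fin s → ℤ[X]) (k : Fin s → ℤ)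
      (wt : Lˣ) (wq : Fin s → Lˣ),
      (wt : L) = algebraMap ℤ[X] L X ∧
      (∀ j, Prime (q j)) ∧
      (∀ j, q j ∣ p) ∧
      (∀ j, (wq j : L) = algebraMap ℤ[X] L (q j)) ∧
      (u : L) = algebraMap ℤ[X] L (C (ε : ℤ)) * ((wt ^ k₀ : Lˣ) : L) *
        ∏ j, ((wq j ^ k j : Lˣ) : L) := by
  set φ := algebraMap ℤ[X] L with hφ
  have hXS : X ∈ S := by rw [hS]; exact Submonoid.subset_closure (by simp)
  have hpS : p ∈ S := by rw [hS]; exact Submonoid.subset_closure (by simp)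
  -- every element of S has the form X^n * p^m
  have hSform : ∀ x ∈ S, ∃ n m : ℕ, x = X ^ n * p ^ m := by
    intro x hx
    rw [hS] at hx
    induction hx using Submonoid.closure_induction with
    | mem y hy =>
      simp only [Set.mem_insert_iff, Set.mem_singleton_iff] at hy
      rcases hy with rfl | rfl
      · exact ⟨1, 0, by simp⟩
      · exact ⟨0, 1, by simp⟩
    | one => exact ⟨0, 0, by simp⟩
    | mul a b _ _ ha hb =>
      obtain ⟨n1, m1, rfl⟩ := ha
      obtain ⟨n2, m2, rfl⟩ := hb
      exact ⟨n1 + n2, m1 + m2, by ring⟩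
  have hle : S ≤ nonZeroDivisors ℤ[X] := by
    intro x hx
    obtain ⟨n, m, rfl⟩ := hSform x hx
    exact mem_nonZeroDivisors_of_ne_zero
      (mul_ne_zero (pow_ne_zero _ Polynomial.X_ne_zero) (pow_ne_zero _ hp0))
  have hinj : Function.Injective φ := IsLocalization.injective L hle
  have hLnt : Nontrivial L := ⟨⟨0, 1, fun h => by
    have : (0 : ℤ[X]) = 1 := hinj (by simpa using h)
    simp at this⟩⟩
  -- the distinguished unit with value φ X
  set wtU : Lˣ := (IsLocalization.map_units L ⟨X, hXS⟩).unit with hwtU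
  have hwtUv : (wtU : L) = φ X := IsUnit.unit_spec _
  -- the sign units
  set E : ℤˣ →* Lˣ := Units.map (φ.comp C).toMonoidHom with hE
  have hEv : ∀ ε : ℤˣ, ((E ε : Lˣ) : L) = φ (C (ε : ℤ)) := fun ε => rfl
  -- the predicate
  set P : Lˣ → Prop := fun w => ∃ (s : ℕ) (ε : ℤˣ) (k₀ : ℤ) (q : Fin s → ℤ[X])
      (k : Fin s → ℤ) (wq : Fin s → Lˣ),
      (∀ j, Prime (q j)) ∧ (∀ j, q j ∣ p) ∧ (∀ j, (wq j : L) = φ (q j)) ∧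
      w = E ε * wtU ^ k₀ * ∏ j, wq j ^ k j with hP
  -- P is multiplicative
  have Pmul : ∀ w v : Lˣ, P w → P v → P (w * v) := by
    rintro w v ⟨s1, e1, a1, q1, k1, w1, hq1, hd1, hw1, rfl⟩
      ⟨s2, e2, a2, q2, k2, w2, hq2, hd2, hw2, rfl⟩
    refine ⟨s1 + s2, e1 * e2, a1 + a2, Fin.append q1 q2, Fin.append k1 k2,
      Fin.append w1 w2, ?_, ?_, ?_, ?_⟩
    · intro j
      refine Fin.addCases (fun i => ?_) (fun i => ?_) j
      · simpa [Fin.append_left] using hq1 i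
      · simpa [Fin.append_right] using hq2 i
    · intro j
      refine Fin.addCases (fun i => ?_) (fun i => ?_) j
      · simpa [Fin.append_left] using hd1 i
      · simpa [Fin.append_right] using hd2 i
    · intro j
      refine Fin.addCases (fun i => ?_) (fun i => ?_) j
      · simpa [Fin.append_left] using hw1 i
      · simpa [Fin.append_right] using hw2 i
    · rw [Fin.prod_univ_add]
      simp only [Fin.append_left, Fin.append_right, map_mul, zpow_add]
      rw [mul_mul_mul_comm (E e1) (E e2) (wtU ^ a1) (wtU ^ a2),
        mul_mul_mul_comm (E e1 * wtU ^ a1) (E e2 * wtU ^ a2)]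
  -- P is closed under inverses
  have Pinv : ∀ w : Lˣ, P w → P w⁻¹ := by
    rintro w ⟨s, e, a, q, k, wq, hq, hd, hw, rfl⟩
    refine ⟨s, e, -a, q, fun j => -k j, wq, hq, hd, hw, ?_⟩
    rw [mul_inv, mul_inv, ← Finset.prod_inv_distrib, ← map_inv,
      Int.units_inv_eq_self]
    simp [zpow_neg]
  -- units with value the image of a prime satisfy P
  have Pprime : ∀ q : ℤ[X], Prime q → ∀ w : Lˣ, (w : L) = φ q → P w := by
    intro q hq w hw
    have hu : IsUnit (φ q) := hw ▸ w.isUnit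
    obtain ⟨⟨b, s'⟩, hb⟩ := IsLocalization.surj S ((hu.unit⁻¹ : Lˣ) : L)
    have h1 : φ q * ((hu.unit⁻¹ : Lˣ) : L) = 1 := by
      have h1' := hu.unit.mul_inv
      rwa [IsUnit.unit_spec] at h1'
    have heq : φ (q * b) = φ (s' : ℤ[X]) := by
      rw [map_mul]
      calc φ q * φ b = φ q * (((hu.unit⁻¹ : Lˣ) : L) * φ (s' : ℤ[X])) := by rw [hb]
        _ = (φ q * ((hu.unit⁻¹ : Lˣ) : L)) * φ (s' : ℤ[X]) := (mul_assoc _ _ _).symm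
        _ = φ (s' : ℤ[X]) := by rw [h1, one_mul]
    have hqd : q ∣ (s' : ℤ[X]) := ⟨b, (hinj heq).symm⟩
    obtain ⟨n, m, hnm⟩ := hSform (s' : ℤ[X]) s'.2
    rcases hq.dvd_or_dvd (show q ∣ X ^ n * p ^ m from hnm ▸ hqd) with h | h
    · -- q divides X, so q is associated to X
      have hqX : q ∣ (X : ℤ[X]) := hq.dvd_of_dvd_pow h
      obtain ⟨v, hv⟩ := (hq.associated_of_dvd Polynomial.prime_X hqX)
      -- q * v = X, so q = X * v⁻¹
      have hq' : q = X * ((v⁻¹ : ℤ[X]ˣ) : ℤ[X]) := by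
        rw [← hv, mul_assoc]; simp
      obtain ⟨r, hr, hCr⟩ := Polynomial.isUnit_iff.mp (v⁻¹ : ℤ[X]ˣ).isUnit
      refine ⟨0, hr.unit, 1, Fin.elim0, Fin.elim0, Fin.elim0,
        (fun j => j.elim0), (fun j => j.elim0), (fun j => j.elim0), ?_⟩
      apply Units.ext
      rw [Units.val_mul, Units.val_mul]
      simp only [Finset.univ_eq_empty, Finset.prod_empty, Units.val_one, mul_one,
        zpow_one]
      rw [hEv, hwtUv, IsUnit.unit_spec, hCr, hw, hq', map_mul, mul_comm]
    · -- q divides p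
      have hqp : q ∣ p := hq.dvd_of_dvd_pow h
      refine ⟨1, 1, 0, fun _ => q, fun _ => 1, fun _ => w,
        (fun _ => hq), (fun _ => hqp), (fun _ => hw), ?_⟩
      apply Units.ext
      simp
  -- key lemma: any unit whose value is the image of a polynomial satisfies P
  have key : ∀ a : ℤ[X], ∀ w : Lˣ, (w : L) = φ a → P w := by
    intro a
    induction a using UniqueFactorizationMonoid.induction_on_prime with
    | h₁ =>
      intro w hw
      exact absurd hw (by simp only [map_zero]; exact w.ne_zero)
    | h₂ a ha =>
      intro w hw
      obtain ⟨r, hr, hCr⟩ := Polynomial.isUnit_iff.mp ha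
      refine ⟨0, hr.unit, 0, Fin.elim0, Fin.elim0, Fin.elim0,
        (fun j => j.elim0), (fun j => j.elim0), (fun j => j.elim0), ?_⟩
      apply Units.ext
      rw [Units.val_mul, Units.val_mul]
      simp only [Finset.univ_eq_empty, Finset.prod_empty, Units.val_one, mul_one,
        zpow_zero]
      rw [hEv, IsUnit.unit_spec, hCr, hw]
    | h₃ a q ha0 hq ih =>
      intro w hw
      have hqa : IsUnit (φ q) ∧ IsUnit (φ a) := by
        rw [← IsUnit.mul_iff, ← map_mul]
        exact hw ▸ w.isUnit
      obtain ⟨hq', ha'⟩ := hqa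
      have hwe : w = hq'.unit * ha'.unit := by
        apply Units.ext
        rw [Units.val_mul, IsUnit.unit_spec, IsUnit.unit_spec, ← map_mul, hw]
      rw [hwe]
      exact Pmul _ _ (Pprime q hq _ hq'.unit_spec) (ih _ ha'.unit_spec)
  -- conclude
  obtain ⟨⟨a, s'⟩, hsur⟩ := IsLocalization.surj S (u : L)
  have hs'u : IsUnit (φ (s' : ℤ[X])) := IsLocalization.map_units L s'
  have h1 : ((u * hs'u.unit : Lˣ) : L) = φ a := by
    rw [Units.val_mul, hs'u.unit_spec]; exact hsur
  have hPu : P u := by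
    have h := Pmul _ _ (key a _ h1) (Pinv _ (key (s' : ℤ[X]) _ hs'u.unit_spec))
    simp only [mul_inv_cancel_right] at h; exact h
  obtain ⟨s, e, k0, q, k, wq, hqprime, hqdvd, hwq, hueq⟩ := hPu
  refine ⟨s, e, k0, q, k, wtU, wq, hwtUv, hqprime, hqdvd, hwq, ?_⟩
  have := congrArg (Units.val) hueq
  rw [Units.val_mul, Units.val_mul, hEv] at this
  rw [this]
  congr 1
  exact map_prod (Units.coeHom L) (fun j => wq j ^ k j) Finset.univ
end

section
/- Let p ∈ ℤ[t] be a non-zero polynomial with non-zero constant coefficient, let q₁, …, q_r be pairwise non-associated prime elements of ℤ[t] such that each q_i divides p and every prime element of ℤ[t] dividing p is associated to some q_i, let S be the multiplicative submonoid of ℤ[t] generated by t and p, and let L be a localization of ℤ[t] at S with localization map φ. Then the map ℤˣ × ℤ × ℤ^r → Lˣ sending (ε, k₀, (k₁, …, k_r)) to φ(ε) · φ(t)^{k₀} · φ(q₁)^{k₁} ⋯ φ(q_r)^{k_r} (powers taken in the unit group Lˣ) is a group isomorphism; in particular the unit group of ℤ[t, t⁻¹, p(t)⁻¹] is isomorphic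 to {±1} × ℤ^{r+1}. -/
open Polynomial

private lemma prod_pow_mul {G : Type*} [CommGroup G] {r : ℕ} (u u' w : G) (v : Fin r → G)
    (x x' : ℤ) (y y' : Fin r → ℤ) :
    (u * w ^ x * ∏ i, v i ^ y i) * (u' * w ^ x' * ∏ i, v i ^ y' i)
      = (u * u') * w ^ (x + x') * ∏ i, v i ^ (y i + y' i) := by
  rw [zpow_add, Finset.prod_congr rfl (fun i _ => zpow_add (v i) (y i) (y' i)),
    Finset.prod_mul_distrib]
  simp only [mul_assoc, mul_comm, mul_left_comm]

private lemma zpow_toNat_eq_of_eq_one {G : Type*} [CommGroup G] {r : ℕ} (u w : G)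
    (v : Fin r → G) (k₀ : ℤ) (k : Fin r → ℤ)
    (h : u * w ^ k₀ * ∏ i, v i ^ k i = 1) :
    u * w ^ ((k₀.toNat : ℤ)) * ∏ i, v i ^ (((k i).toNat : ℤ))
      = w ^ (((-k₀).toNat : ℤ)) * ∏ i, v i ^ ((((-(k i)).toNat : ℤ))) := by
  have h3 := prod_pow_mul u 1 w v k₀ (((-k₀).toNat : ℤ)) k (fun i => (((-(k i)).toNat : ℤ)))
  rw [h, one_mul, mul_one, one_mul] at h3
  rw [h3]
  rw [show ((k₀.toNat : ℤ)) = k₀ + (((-k₀).toNat : ℤ)) from by omega]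
  congr 1
  exact Finset.prod_congr rfl fun i _ => by
    rw [show (((k i).toNat : ℤ)) = k i + ((((-(k i)).toNat : ℤ))) from by omega]

private lemma poly_rep {r : ℕ} (q : Fin r → ℤ[X]) (a : ℤ[X]) :
    a ≠ 0 →
    (∀ z : ℤ[X], Prime z → z ∣ a → Associated z X ∨ ∃ i, Associated z (q i)) →
    ∃ (ε : ℤˣ) (m₀ : ℕ) (m : Fin r → ℕ),
      a = C ((ε : ℤ)) * X ^ m₀ * ∏ i, q i ^ m i := by
  induction a using UniqueFactorizationMonoid.induction_on_prime with
  | h₁ => exact fun h _ => absurd rfl h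
  | h₂ x hx =>
    intro _ _
    obtain ⟨c, hc, rfl⟩ := Polynomial.isUnit_iff.mp hx
    exact ⟨hc.unit, 0, 0, by simp [hc.unit_spec]⟩
  | h₃ b z hb hz IH =>
    intro hne hcond
    have hbne : b ≠ 0 := fun h => hne (by rw [h, mul_zero])
    obtain ⟨ε, m₀, m, hbrep⟩ := IH hbne
      (fun z' hz' hd => hcond z' hz' (hd.trans (dvd_mul_left b z)))
    rcases hcond z hz (dvd_mul_right z b) with hzX | ⟨i, hzi⟩
    · obtain ⟨u, hu⟩ := hzX
      obtain ⟨c, hc, hcu⟩ := Polynomial.isUnit_iff.mp (u⁻¹ : ℤ[X]ˣ).isUnit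
      have hz' : z = X * C c := by
        rw [hcu, Units.eq_mul_inv_iff_mul_eq]; exact hu
      refine ⟨hc.unit * ε, m₀ + 1, m, ?_⟩
      rw [hbrep, hz']
      push_cast [hc.unit_spec]
      rw [C_mul]
      ring
    · obtain ⟨u, hu⟩ := hzi
      obtain ⟨c, hc, hcu⟩ := Polynomial.isUnit_iff.mp (u⁻¹ : ℤ[X]ˣ).isUnit
      have hz' : z = q i * C c := by
        rw [hcu, Units.eq_mul_inv_iff_mul_eq]; exact hu
      refine ⟨hc.unit * ε, m₀, fun j => m j + if j = i then 1 else 0, ?_⟩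
      have hprod : (∏ j, q j ^ (m j + if j = i then 1 else 0))
          = (∏ j, q j ^ m j) * q i := by
        rw [Finset.prod_congr rfl
          (fun j _ => pow_add (q j) (m j) (if j = i then 1 else 0)),
          Finset.prod_mul_distrib]
        congr 1
        rw [show (∏ j, q j ^ if j = i then 1 else 0) = ∏ j, if j = i then q j else 1 from
          Finset.prod_congr rfl (fun j _ => by split_ifs <;> simp)]
        simp
      rw [hbrep, hz', hprod]
      push_cast [hc.unit_spec]
      rw [C_mul]
      ring

private lemma poly_rep_unique {r : ℕ} (q : Fin r → ℤ[X]) (hq : ∀ i, Prime (q i))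
    (hqna : ∀ i j, i ≠ j → ¬ Associated (q i) (q j))
    (hXq : ∀ i, ¬ Associated (X : ℤ[X]) (q i))
    (ε ε' : ℤˣ) (m₀ n₀ : ℕ) (m n : Fin r → ℕ)
    (h : C ((ε : ℤ)) * X ^ m₀ * ∏ i, q i ^ m i
       = C ((ε' : ℤ)) * X ^ n₀ * ∏ i, q i ^ n i) :
    ε = ε' ∧ m₀ = n₀ ∧ m = n := by
  have hX : Prime (X : ℤ[X]) := Polynomial.prime_X
  have hXdq : ∀ i, ¬ (X : ℤ[X]) ∣ q i := fun i hd => hXq i (hX.associated_of_dvd (hq i) hd)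
  have hqdX : ∀ i, ¬ q i ∣ (X : ℤ[X]) := fun i hd =>
    hXq i ((hq i).associated_of_dvd hX hd).symm
  have hqq : ∀ i j, i ≠ j → ¬ q i ∣ q j := fun i j hij hd =>
    hqna i j hij ((hq i).associated_of_dvd (hq j) hd)
  have hCu : ∀ δ : ℤˣ, IsUnit (C ((δ : ℤ))) := fun δ => Polynomial.isUnit_C.mpr δ.isUnit
  have countX : ∀ (δ : ℤˣ) (c : ℕ) (e : Fin r → ℕ),
      emultiplicity (X : ℤ[X]) (C ((δ : ℤ)) * X ^ c * ∏ i, q i ^ e i) = c := by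
    intro δ c e
    rw [emultiplicity_mul hX, emultiplicity_mul hX,
      emultiplicity_of_isUnit_right hX.not_unit (hCu δ),
      emultiplicity_pow_self_of_prime hX,
      Finset.emultiplicity_prod hX]
    rw [Finset.sum_eq_zero, zero_add, add_zero]
    intro i _
    rw [emultiplicity_pow hX, emultiplicity_eq_zero.mpr (hXdq i), mul_zero]
  have countq : ∀ (j : Fin r) (δ : ℤˣ) (c : ℕ) (e : Fin r → ℕ),
      emultiplicity (q j) (C ((δ : ℤ)) * X ^ c * ∏ i, q i ^ e i) = e j := by
    intro j δ c e
    rw [emultiplicity_mul (hq j), emultiplicity_mul (hq j),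
      emultiplicity_of_isUnit_right (hq j).not_unit (hCu δ),
      emultiplicity_pow (hq j), emultiplicity_eq_zero.mpr (hqdX j), mul_zero,
      Finset.emultiplicity_prod (hq j), zero_add, zero_add]
    rw [Finset.sum_eq_single j]
    · exact emultiplicity_pow_self_of_prime (hq j) (e j)
    · intro i _ hij
      rw [emultiplicity_pow (hq j),
        emultiplicity_eq_zero.mpr (hqq j i (Ne.symm hij)), mul_zero]
    · intro habs; exact absurd (Finset.mem_univ j) habs
  have hm₀ : m₀ = n₀ := by
    have := (countX ε m₀ m).symm.trans (h ▸ countX ε' n₀ n)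
    exact_mod_cast this
  have hmn : m = n := by
    funext j
    have := (countq j ε m₀ m).symm.trans (h ▸ countq j ε' n₀ n)
    exact_mod_cast this
  refine ⟨?_, hm₀, hmn⟩
  subst hm₀ hmn
  have hK : (X : ℤ[X]) ^ m₀ * ∏ i, q i ^ m i ≠ 0 := by
    apply mul_ne_zero (pow_ne_zero _ X_ne_zero)
    exact Finset.prod_ne_zero_iff.mpr fun i _ => pow_ne_zero _ (hq i).ne_zero
  rw [mul_assoc, mul_assoc] at h
  have := mul_right_cancel₀ hK h
  exact Units.ext (by exact_mod_cast Polynomial.C_injective this)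

/-- If `q₁, …, q_r` is a complete system of pairwise non-associated prime divisors of a
non-zero polynomial `p ∈ ℤ[t]` with non-zero constant term, then the map
`ℤˣ × ℤ × ℤ^r → Lˣ`, `(ε, k₀, k) ↦ φ(ε) · φ(t)^{k₀} · ∏ φ(q_i)^{k_i}` is a group
isomorphism onto the unit group of `L ≅ ℤ[t, t⁻¹, p(t)⁻¹]`. -/
theorem units_of_laurent_localization_iso (p : ℤ[X]) (hp0 : p ≠ 0) (hc0 : p.coeff 0 ≠ 0)
    (r : ℕ) (q : Fin r → ℤ[X])
    (hq : ∀ i, Prime (q i)) (hqd : ∀ i, q i ∣ p)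
    (hqna : ∀ i j, i ≠ j → ¬ Associated (q i) (q j))
    (hqall : ∀ z : ℤ[X], Prime z → z ∣ p → ∃ i, Associated z (q i))
    (S : Submonoid ℤ[X]) (hS : S = Submonoid.closure {X, p})
    (L : Type*) [CommRing L] [Algebra ℤ[X] L] [IsLocalization S L]
    (wt : Lˣ) (hwt : (wt : L) = algebraMap ℤ[X] L X)
    (wq : Fin r → Lˣ) (hwq : ∀ i, (wq i : L) = algebraMap ℤ[X] L (q i))
    (g : ℤˣ × ℤ × (Fin r → ℤ) → Lˣ)
    (hg : ∀ ε k₀ k, ((g (ε, k₀, k) : Lˣ) : L) =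
      algebraMap ℤ[X] L (C (ε : ℤ)) * ((wt ^ k₀ : Lˣ) : L) *
        ∏ i, ((wq i ^ k i : Lˣ) : L)) :
    Function.Bijective g ∧
    ∀ (ε ε' : ℤˣ) (k₀ k₀' : ℤ) (k k' : Fin r → ℤ),
      g (ε * ε', k₀ + k₀', k + k') = g (ε, k₀, k) * g (ε', k₀', k') := by
  subst hS
  have hX : Prime (X : ℤ[X]) := Polynomial.prime_X
  have hXq : ∀ i, ¬ Associated (X : ℤ[X]) (q i) := fun i hA =>
    hc0 (Polynomial.X_dvd_iff.mp (hA.dvd.trans (hqd i)))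
  -- The submonoid of nonzero polynomials all of whose prime divisors are X or some q i
  let K : Submonoid ℤ[X] :=
  { carrier := {x | x ≠ 0 ∧ ∀ z : ℤ[X], Prime z → z ∣ x →
      Associated z X ∨ ∃ i, Associated z (q i)},
    one_mem' := ⟨one_ne_zero, fun z hz hd => absurd (isUnit_of_dvd_one hd) hz.not_unit⟩,
    mul_mem' := fun {a b} ha hb => ⟨mul_ne_zero ha.1 hb.1,
      fun z hz hd => (hz.dvd_mul.mp hd).elim (ha.2 z hz) (hb.2 z hz)⟩ }
  have hSK : Submonoid.closure {X, p} ≤ K := Submonoid.closure_le.mpr (by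
    rintro x hx
    simp only [Set.mem_insert_iff, Set.mem_singleton_iff] at hx
    rcases hx with rfl | rfl
    · exact ⟨X_ne_zero, fun z hz hd => Or.inl (hz.associated_of_dvd hX hd)⟩
    · exact ⟨hp0, fun z hz hd => Or.inr (hqall z hz hd)⟩)
  have hle : Submonoid.closure {X, p} ≤ nonZeroDivisors ℤ[X] :=
    fun x hx => mem_nonZeroDivisors_of_ne_zero (hSK hx).1
  have φinj : Function.Injective (algebraMap ℤ[X] L) := IsLocalization.injective L hle
  haveI : IsDomain L := IsLocalization.isDomain_of_le_nonZeroDivisors L hle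
  -- units machinery
  let uC : ℤˣ →* Lˣ := (Units.map (algebraMap ℤ[X] L).toMonoidHom).comp
    (Units.map (C : ℤ →+* ℤ[X]).toMonoidHom)
  have huC : ∀ δ : ℤˣ, ((uC δ : Lˣ) : L) = algebraMap ℤ[X] L (C ((δ : ℤ))) := fun δ => rfl
  have hgu : ∀ ε k₀ k, g (ε, k₀, k) = uC ε * wt ^ k₀ * ∏ i, wq i ^ k i := by
    intro ε k₀ k
    apply Units.ext
    rw [hg]
    simp only [Units.val_mul, Units.coe_prod, huC]
  have hval : ∀ (δ : ℤˣ) (c : ℕ) (e : Fin r → ℕ),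
      ((uC δ * wt ^ ((c : ℤ)) * ∏ i, wq i ^ ((e i : ℤ)) : Lˣ) : L)
        = algebraMap ℤ[X] L (C ((δ : ℤ)) * X ^ c * ∏ i, q i ^ e i) := by
    intro δ c e
    simp only [zpow_natCast, Units.val_mul, Units.coe_prod, Units.val_pow_eq_pow_val,
      huC, hwt, hwq, map_mul, map_pow, map_prod]
  have hom : ∀ (ε ε' : ℤˣ) (k₀ k₀' : ℤ) (k k' : Fin r → ℤ),
      g (ε * ε', k₀ + k₀', k + k') = g (ε, k₀, k) * g (ε', k₀', k') := by
    intro ε ε' k₀ k₀' k k'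
    simp only [hgu]
    rw [prod_pow_mul, map_mul]
    simp only [Pi.add_apply]
  -- kernel triviality
  have hker : ∀ (ε : ℤˣ) (k₀ : ℤ) (k : Fin r → ℤ), g (ε, k₀, k) = 1 →
      ε = 1 ∧ k₀ = 0 ∧ k = 0 := by
    intro ε k₀ k h1
    have heq : uC ε * wt ^ k₀ * ∏ i, wq i ^ k i = 1 := by rw [← hgu]; exact h1
    have h2 := zpow_toNat_eq_of_eq_one (uC ε) wt wq k₀ k heq
    have h2' : (uC ε * wt ^ ((k₀.toNat : ℤ)) * ∏ i, wq i ^ (((k i).toNat : ℤ)) : Lˣ)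
        = uC (1 : ℤˣ) * wt ^ (((-k₀).toNat : ℤ))
          * ∏ i, wq i ^ ((((-(k i)).toNat : ℤ))) := by
      rw [map_one, one_mul]; exact h2
    have h5 := congrArg Units.val h2'
    rw [hval ε k₀.toNat (fun i => (k i).toNat),
      hval 1 ((-k₀).toNat) (fun i => (-(k i)).toNat)] at h5
    have h6 := φinj h5
    obtain ⟨hε, h7, h8⟩ := poly_rep_unique q hq hqna hXq ε 1 _ _ _ _ h6
    refine ⟨hε, by omega, funext fun i => ?_⟩
    have := congrFun h8 i
    simp only [Pi.zero_apply]
    omega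
  refine ⟨⟨?_, ?_⟩, hom⟩
  · -- injectivity
    rintro ⟨ε, k₀, k⟩ ⟨ε', k₀', k'⟩ hvw
    have hcomb : g (ε * ε'⁻¹, k₀ - k₀', k - k') * g (ε', k₀', k') = g (ε, k₀, k) := by
      rw [← hom, inv_mul_cancel_right, sub_add_cancel, sub_add_cancel]
    have h1 : g (ε * ε'⁻¹, k₀ - k₀', k - k') = 1 := by
      have h2 : g (ε * ε'⁻¹, k₀ - k₀', k - k') * g (ε', k₀', k')
          = 1 * g (ε', k₀', k') := by
        rw [hcomb, hvw, one_mul]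
      exact mul_right_cancel h2
    obtain ⟨ha, hb, hc⟩ := hker _ _ _ h1
    simp only [Prod.mk.injEq]
    refine ⟨mul_inv_eq_one.mp ha, sub_eq_zero.mp hb, sub_eq_zero.mp hc⟩
  · -- surjectivity
    intro u
    obtain ⟨⟨a, s⟩, hu⟩ := IsLocalization.surj (Submonoid.closure {X, p}) (u : L)
    have hsK := hSK s.2
    have hane : a ≠ 0 := by
      intro h0
      rw [h0, map_zero] at hu
      have : IsUnit ((0 : L)) := hu ▸ (u.isUnit.mul (IsLocalization.map_units L s))
      exact not_isUnit_zero this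
    have hcond : ∀ z : ℤ[X], Prime z → z ∣ a →
        Associated z X ∨ ∃ i, Associated z (q i) := by
      intro z hz hd
      have hunit : IsUnit (algebraMap ℤ[X] L z) := by
        have ha : IsUnit (algebraMap ℤ[X] L a) :=
          hu ▸ (u.isUnit.mul (IsLocalization.map_units L s))
        obtain ⟨b, rfl⟩ := hd
        rw [map_mul] at ha
        exact isUnit_of_mul_isUnit_left ha
      obtain ⟨w, hw⟩ := hunit.exists_right_inv
      obtain ⟨⟨b, s₂⟩, hb⟩ := IsLocalization.surj (Submonoid.closure {X, p}) w
      have hzb : z * b = ↑s₂ := by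
        apply φinj
        rw [map_mul]
        calc algebraMap ℤ[X] L z * algebraMap ℤ[X] L b
            = algebraMap ℤ[X] L z * (w * algebraMap ℤ[X] L ↑s₂) := by rw [hb]
          _ = (algebraMap ℤ[X] L z * w) * algebraMap ℤ[X] L ↑s₂ := (mul_assoc _ _ _).symm
          _ = algebraMap ℤ[X] L ↑s₂ := by rw [hw, one_mul]
      exact (hSK s₂.2).2 z hz (hzb ▸ dvd_mul_right z b)
    obtain ⟨ε, a₀, ka, harep⟩ := poly_rep q a hane hcond
    obtain ⟨ε', b₀, kb, hsrep⟩ := poly_rep q ↑s hsK.1 hsK.2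
    refine ⟨(ε * ε'⁻¹, ((a₀ : ℤ)) - b₀, fun i => ((ka i : ℤ)) - kb i), ?_⟩
    have hUa : ((uC ε * wt ^ ((a₀ : ℤ)) * ∏ i, wq i ^ ((ka i : ℤ)) : Lˣ) : L)
        = algebraMap ℤ[X] L a := by rw [hval, ← harep]
    have hUs : ((uC ε' * wt ^ ((b₀ : ℤ)) * ∏ i, wq i ^ ((kb i : ℤ)) : Lˣ) : L)
        = algebraMap ℤ[X] L ↑s := by rw [hval, ← hsrep]
    have hgv : g (ε * ε'⁻¹, ((a₀ : ℤ)) - b₀, fun i => ((ka i : ℤ)) - kb i)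
        * (uC ε' * wt ^ ((b₀ : ℤ)) * ∏ i, wq i ^ ((kb i : ℤ)))
        = uC ε * wt ^ ((a₀ : ℤ)) * ∏ i, wq i ^ ((ka i : ℤ)) := by
      rw [hgu, prod_pow_mul, ← map_mul, inv_mul_cancel_right]
      congr 1
      · congr 1; ring
      · exact Finset.prod_congr rfl fun i _ => by congr 1; ring
    have huu : u * (uC ε' * wt ^ ((b₀ : ℤ)) * ∏ i, wq i ^ ((kb i : ℤ)))
        = uC ε * wt ^ ((a₀ : ℤ)) * ∏ i, wq i ^ ((ka i : ℤ)) :=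
      Units.ext (by rw [Units.val_mul, hUa, hUs]; exact hu)
    exact mul_right_cancel (hgv.trans huu.symm)
end

section
/- Let p ∈ ℤ[t] be a non-zero polynomial with non-negative coefficients, S the multiplicative submonoid of ℤ[t] generated by t and p, and L a localization of ℤ[t] at S. Then the set of bounded elements of L is a subring of L: it contains 0 and 1 and is closed under addition, negation and multiplication. -/
open Polynomial

/-- An element of a localization `L` of `ℤ[t]` at the submonoid generated by `t` and `p`
is *bounded* if it can be written as `φ(q) / φ(t^ℓ p^k)` with
`−m·t^ℓ p^k ≤ q ≤ m·t^ℓ p^k` coefficientwise for some `m`. -/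
def IsBddElem (p : ℤ[X]) (L : Type*) [CommRing L] [Algebra ℤ[X] L] (r : L) : Prop :=
  ∃ (m ℓ k : ℕ) (q : ℤ[X]),
    r * algebraMap ℤ[X] L (X ^ ℓ * p ^ k) = algebraMap ℤ[X] L q ∧
    ∀ i : ℕ, -((m : ℤ) * (X ^ ℓ * p ^ k).coeff i) ≤ q.coeff i ∧
      q.coeff i ≤ (m : ℤ) * (X ^ ℓ * p ^ k).coeff i

lemma coeff_mul_nonneg' {a b : ℤ[X]} (ha : ∀ i, 0 ≤ a.coeff i) (hb : ∀ i, 0 ≤ b.coeff i) :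
    ∀ i, 0 ≤ (a * b).coeff i := by
  intro n
  rw [coeff_mul]
  exact Finset.sum_nonneg fun x _ => mul_nonneg (ha _) (hb _)

lemma coeff_pow_nonneg' {a : ℤ[X]} (ha : ∀ i, 0 ≤ a.coeff i) (k : ℕ) :
    ∀ i, 0 ≤ (a ^ k).coeff i := by
  induction k with
  | zero => intro i; simp [coeff_one]; split <;> norm_num
  | succ n ih =>
      rw [pow_succ]
      exact coeff_mul_nonneg' ih ha

lemma bound_mul' {a b d e : ℤ[X]} {m n : ℤ}
    (ha : ∀ i, |a.coeff i| ≤ m * d.coeff i) (hb : ∀ i, |b.coeff i| ≤ n * e.coeff i) :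
    ∀ i, |(a * b).coeff i| ≤ m * n * (d * e).coeff i := by
  intro i
  rw [coeff_mul, coeff_mul, Finset.mul_sum]
  refine le_trans (Finset.abs_sum_le_sum_abs _ _) (Finset.sum_le_sum fun x _ => ?_)
  rw [abs_mul]
  calc |a.coeff x.1| * |b.coeff x.2| ≤ (m * d.coeff x.1) * (n * e.coeff x.2) :=
        mul_le_mul (ha _) (hb _) (abs_nonneg _) (le_trans (abs_nonneg _) (ha _))
    _ = m * n * (d.coeff x.1 * e.coeff x.2) := by ring

/-- The bounded elements of `ℤ[t, t⁻¹, p(t)⁻¹]` form a subring. -/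
theorem isBddElem_subring (p : ℤ[X]) (hp0 : p ≠ 0) (hpc : ∀ i, 0 ≤ p.coeff i)
    (S : Submonoid ℤ[X]) (hS : S = Submonoid.closure {X, p})
    (L : Type*) [CommRing L] [Algebra ℤ[X] L] [IsLocalization S L] :
    IsBddElem p L (0 : L) ∧
    IsBddElem p L (1 : L) ∧
    (∀ a b : L, IsBddElem p L a → IsBddElem p L b → IsBddElem p L (a + b)) ∧
    (∀ a : L, IsBddElem p L a → IsBddElem p L (-a)) ∧
    (∀ a b : L, IsBddElem p L a → IsBddElem p L b → IsBddElem p L (a * b)) := by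
  have hX : ∀ ℓ i : ℕ, (0:ℤ) ≤ ((X:ℤ[X]) ^ ℓ).coeff i := by
    intro ℓ i; rw [coeff_X_pow]; split <;> norm_num
  have dnn : ∀ ℓ k i : ℕ, (0:ℤ) ≤ ((X:ℤ[X]) ^ ℓ * p ^ k).coeff i := fun ℓ k =>
    coeff_mul_nonneg' (hX ℓ) (coeff_pow_nonneg' hpc k)
  refine ⟨⟨0, 0, 0, 0, by simp, fun i => by simp⟩,
    ⟨1, 0, 0, 1, by simp, fun i => by
      simp only [pow_zero, one_mul, Int.natCast_one, coeff_one]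
      split <;> norm_num⟩, ?_, ?_, ?_⟩
  · rintro a b ⟨m1, l1, k1, q1, h1, hb1⟩ ⟨m2, l2, k2, q2, h2, hb2⟩
    have key : (X:ℤ[X]) ^ (l1 + l2) * p ^ (k1 + k2) = (X ^ l1 * p ^ k1) * (X ^ l2 * p ^ k2) := by
      ring
    refine ⟨m1 + m2, l1 + l2, k1 + k2, q1 * (X ^ l2 * p ^ k2) + q2 * (X ^ l1 * p ^ k1), ?_, ?_⟩
    · rw [key, map_mul]
      have : (a + b) * (algebraMap ℤ[X] L (X ^ l1 * p ^ k1) *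
          algebraMap ℤ[X] L (X ^ l2 * p ^ k2)) =
          (a * algebraMap ℤ[X] L (X ^ l1 * p ^ k1)) * algebraMap ℤ[X] L (X ^ l2 * p ^ k2) +
          (b * algebraMap ℤ[X] L (X ^ l2 * p ^ k2)) * algebraMap ℤ[X] L (X ^ l1 * p ^ k1) := by
        ring
      rw [this, h1, h2, ← map_mul, ← map_mul, ← map_add]
    · intro i
      rw [key]
      refine abs_le.mp ?_
      have ha1 : ∀ j, |q1.coeff j| ≤ (m1:ℤ) * ((X:ℤ[X]) ^ l1 * p ^ k1).coeff j :=
        fun j => abs_le.mpr ⟨(hb1 j).1, (hb1 j).2⟩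
      have ha2 : ∀ j, |q2.coeff j| ≤ (m2:ℤ) * ((X:ℤ[X]) ^ l2 * p ^ k2).coeff j :=
        fun j => abs_le.mpr ⟨(hb2 j).1, (hb2 j).2⟩
      have hd1 : ∀ j, |((X:ℤ[X]) ^ l1 * p ^ k1).coeff j| ≤
          (1:ℤ) * ((X:ℤ[X]) ^ l1 * p ^ k1).coeff j := by
        intro j; rw [abs_of_nonneg (dnn l1 k1 j), one_mul]
      have hd2 : ∀ j, |((X:ℤ[X]) ^ l2 * p ^ k2).coeff j| ≤
          (1:ℤ) * ((X:ℤ[X]) ^ l2 * p ^ k2).coeff j := by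
        intro j; rw [abs_of_nonneg (dnn l2 k2 j), one_mul]
      have b1 := bound_mul' ha1 hd2 i
      have b2 := bound_mul' ha2 hd1 i
      rw [mul_comm ((X:ℤ[X]) ^ l2 * p ^ k2)] at b2
      calc |(q1 * (X ^ l2 * p ^ k2) + q2 * (X ^ l1 * p ^ k1)).coeff i|
          ≤ |(q1 * (X ^ l2 * p ^ k2)).coeff i| + |(q2 * (X ^ l1 * p ^ k1)).coeff i| := by
            rw [coeff_add]; exact abs_add_le _ _
        _ ≤ ((m1 + m2 : ℕ) : ℤ) * ((X ^ l1 * p ^ k1) * (X ^ l2 * p ^ k2)).coeff i := by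
            push_cast
            nlinarith [b1, b2]
  · rintro a ⟨m, ℓ, k, q, h, hb⟩
    refine ⟨m, ℓ, k, -q, ?_, fun i => ?_⟩
    · rw [neg_mul, h, map_neg]
    · rw [coeff_neg]
      exact ⟨by linarith [(hb i).2], by linarith [(hb i).1]⟩
  · rintro a b ⟨m1, l1, k1, q1, h1, hb1⟩ ⟨m2, l2, k2, q2, h2, hb2⟩
    have key : (X:ℤ[X]) ^ (l1 + l2) * p ^ (k1 + k2) = (X ^ l1 * p ^ k1) * (X ^ l2 * p ^ k2) := by
      ring
    refine ⟨m1 * m2, l1 + l2, k1 + k2, q1 * q2, ?_, ?_⟩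
    · rw [key, map_mul]
      have : a * b * (algebraMap ℤ[X] L (X ^ l1 * p ^ k1) *
          algebraMap ℤ[X] L (X ^ l2 * p ^ k2)) =
          (a * algebraMap ℤ[X] L (X ^ l1 * p ^ k1)) *
          (b * algebraMap ℤ[X] L (X ^ l2 * p ^ k2)) := by ring
      rw [this, h1, h2, ← map_mul]
    · intro i
      rw [key]
      refine abs_le.mp ?_
      have ha1 : ∀ j, |q1.coeff j| ≤ (m1:ℤ) * ((X:ℤ[X]) ^ l1 * p ^ k1).coeff j :=
        fun j => abs_le.mpr ⟨(hb1 j).1, (hb1 j).2⟩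
      have ha2 : ∀ j, |q2.coeff j| ≤ (m2:ℤ) * ((X:ℤ[X]) ^ l2 * p ^ k2).coeff j :=
        fun j => abs_le.mpr ⟨(hb2 j).1, (hb2 j).2⟩
      have := bound_mul' ha1 ha2 i
      push_cast
      exact this
end
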